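/- In the level-set setting, let p : U → ℝ be differentiable at x and regard P(y) = I − N(y) as the rank-2 tensor field P(y)(a,b) := ⟨a, P(y) b⟩. Then, with all submanifold operators taken with respect to the projection P(x), for every a ∈ ℝⁿ: (Div_M(y ↦ p(y)·P(y))(x))(a) = Dp(x)[P(x) a] − p(x)·⟨κ(x), a⟩. Consequently, since P(x)κ(x) = 0, the tangential projection of Div_M(pP) equals the submanifold gradient of p: (Div_M(pP)(x))(P(x) a) = Dp(x)[P(x) a] for all a ∈ ℝⁿ. -/

import Mathlib

noncomputable section

open scoped RealInnerProductSpace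

/-- Euclidean space `ℝⁿ`. -/
abbrev E (n : ℕ) := EuclideanSpace ℝ (Fin n)

/-- The standard orthonormal basis vector `e_k` of `ℝⁿ`. -/
def stdb (n : ℕ) (k : Fin n) : E n := EuclideanSpace.single k 1

/-- The submanifold divergence of a vector field `v` at `y`, with respect to the
projection field `P(y) = I − N(y)`:
`div_M v(y) := Σ_k ⟨Dv(y)[P(y) e_k], e_k⟩`. -/
def divM (n : ℕ) (Nf : E n → (E n →L[ℝ] E n)) (v : E n → E n) (y : E n) : ℝ :=
  ∑ k, ⟪fderiv ℝ v y (stdb n k - Nf y (stdb n k)), stdb n k⟫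

/-- The mean curvature vector, defined componentwise by
`κ_j(y) := div_M(z ↦ N(z) e_j)(y)`. -/
def kappa (n : ℕ) (Nf : E n → (E n →L[ℝ] E n)) (y : E n) : E n :=
  ∑ j, (divM n Nf (fun z => Nf z (stdb n j)) y) • stdb n j

/-- Expansion of a vector in the standard basis. -/
lemma stdb_expand (n : ℕ) (v : E n) : ∑ j, v j • stdb n j = v := by
  have := (EuclideanSpace.basisFun (Fin n) ℝ).sum_repr v
  simpa [stdb, EuclideanSpace.basisFun_apply, EuclideanSpace.basisFun_repr] using this

lemma stdb_inner_right (n : ℕ) (v : E n) (k : Fin n) : ⟪v, stdb n k⟫ = v k := by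
  simp [stdb, EuclideanSpace.inner_single_right]

lemma stdb_inner_left (n : ℕ) (v : E n) (k : Fin n) : ⟪stdb n k, v⟫ = v k := by
  simp [stdb, EuclideanSpace.inner_single_left]

/-- Pulling a sum of coordinates through a continuous linear map into `ℝ`. -/
lemma sum_mul_clm (n : ℕ) (c : E n) (T : E n →L[ℝ] ℝ) :
    ∑ k, c k * T (stdb n k) = T c := by
  calc ∑ k, c k * T (stdb n k) = ∑ k, T (c k • stdb n k) := by
        simp [map_smul, smul_eq_mul]
    _ = T (∑ k, c k • stdb n k) := (map_sum T _ _).symm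
    _ = T c := by rw [stdb_expand]

lemma inner_eq_sum (n : ℕ) (a w : E n) : ⟪a, w⟫ = ∑ j, a j * w j := by
  simp [PiLp.inner_apply, mul_comm]

set_option maxHeartbeats 2000000 in
/-- In the level-set setting (a C² field `N` of symmetric idempotent matrices on an
open neighborhood `U` of `x`, `P(y) = I − N(y)`), for `p` differentiable at `x` and
the rank-2 tensor field `(pP)(y)(a,b) = p(y)·⟨a, P(y) b⟩`, with all submanifold
operators taken with respect to `P(x)`:
(1) `(Div_M(pP)(x))(a) = Dp(x)[P(x) a] − p(x)·⟨κ(x), a⟩` for every `a`;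
(2) consequently, `(Div_M(pP)(x))(P(x) a) = Dp(x)[P(x) a]` for every `a`. -/
theorem divM_pressure_projector (n : ℕ)
    (U : Set (E n)) (hU : IsOpen U) (x : E n) (hx : x ∈ U)
    (Nf : E n → (E n →L[ℝ] E n))
    (hC2 : ContDiffOn ℝ 2 Nf U)
    (hsym : ∀ y ∈ U, ∀ a b : E n, ⟪Nf y a, b⟫ = ⟪a, Nf y b⟫)
    (hidem : ∀ y ∈ U, ∀ a : E n, Nf y (Nf y a) = Nf y a)
    (p : E n → ℝ) (hp : DifferentiableAt ℝ p x) :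
    (∀ a : E n,
      ∑ k, fderiv ℝ (fun y => p y * ⟪a, stdb n k - Nf y (stdb n k)⟫) x
          (stdb n k - Nf x (stdb n k))
        = fderiv ℝ p x (a - Nf x a) - p x * ⟪kappa n Nf x, a⟫) ∧
    (∀ a : E n,
      ∑ k, fderiv ℝ (fun y => p y * ⟪a - Nf x a, stdb n k - Nf y (stdb n k)⟫) x
          (stdb n k - Nf x (stdb n k))
        = fderiv ℝ p x (a - Nf x a)) := by
    classical
  have hmem : U ∈ nhds x := hU.mem_nhds hx
  set D := fderiv ℝ Nf x with hDdef
  have hNd : DifferentiableAt ℝ Nf x :=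
    ((hC2.differentiableOn (by norm_num)).differentiableAt hmem)
  have hND : HasFDerivAt Nf D x := hNd.hasFDerivAt
  have hNv : ∀ v : E n, HasFDerivAt (fun y => Nf y v) (D.flip v) x := by
    intro v
    have := hND.clm_apply (hasFDerivAt_const v x)
    simpa using this
  have hNNx : ∀ v : E n, Nf x (Nf x v) = Nf x v := hidem x hx
  have hsymx : ∀ a b : E n, ⟪Nf x a, b⟫ = ⟪a, Nf x b⟫ := hsym x hx
  -- differentiated symmetry : ⟪D h u, v⟫ = ⟪u, D h v⟫
  have hsymD : ∀ h u v : E n, ⟪D h u, v⟫ = ⟪u, D h v⟫ := by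
    intro h u v
    have hfd : HasFDerivAt (fun y => ⟪u, Nf y v⟫ - ⟪v, Nf y u⟫)
        (((innerSL ℝ u).comp (D.flip v)) - ((innerSL ℝ v).comp (D.flip u))) x :=
      (((innerSL ℝ u).hasFDerivAt.comp x (hNv v)).sub
        ((innerSL ℝ v).hasFDerivAt.comp x (hNv u)))
    have heq : (fun y => ⟪u, Nf y v⟫ - ⟪v, Nf y u⟫) =ᶠ[nhds x] (fun _ => (0:ℝ)) := by
      filter_upwards [hmem] with y hy
      rw [← hsym y hy u v, real_inner_comm]
      ring
    have h0 : (((innerSL ℝ u).comp (D.flip v)) - ((innerSL ℝ v).comp (D.flip u))) = 0 := by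
      have := hfd.fderiv
      rw [heq.fderiv_eq, fderiv_fun_const] at this
      simpa using this.symm
    have := congrFun (congrArg (fun (T : E n →L[ℝ] ℝ) => (T : E n → ℝ)) h0) h
    simp only [ContinuousLinearMap.sub_apply, ContinuousLinearMap.comp_apply,
      ContinuousLinearMap.flip_apply, ContinuousLinearMap.zero_apply, innerSL_apply_apply] at this
    have h2 : ⟪u, D h v⟫ = ⟪v, D h u⟫ := by linarith
    rw [real_inner_comm]
    exact h2.symm
  -- differentiated idempotency : D h (Nf x v) + Nf x (D h v) = D h v
  have hidemD : ∀ h v : E n, D h (Nf x v) + Nf x (D h v) = D h v := by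
    intro h v
    have hfd : HasFDerivAt (fun y => Nf y (Nf y v) - Nf y v)
        ((((Nf x).comp (D.flip v) + D.flip (Nf x v))) - D.flip v) x :=
      ((hND.clm_apply (hNv v)).sub (hNv v))
    have heq : (fun y => Nf y (Nf y v) - Nf y v) =ᶠ[nhds x] (fun _ => (0 : E n)) := by
      filter_upwards [hmem] with y hy
      rw [hidem y hy v]; simp
    have h0 : (((Nf x).comp (D.flip v) + D.flip (Nf x v)) - D.flip v) = 0 := by
      have := hfd.fderiv
      rw [heq.fderiv_eq, fderiv_fun_const] at this
      simpa using this.symm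
    have := congrFun (congrArg (fun (T : E n →L[ℝ] E n) => (T : E n → E n)) h0) h
    simp only [ContinuousLinearMap.sub_apply, ContinuousLinearMap.add_apply,
      ContinuousLinearMap.comp_apply, ContinuousLinearMap.flip_apply,
      ContinuousLinearMap.zero_apply] at this
    have h2 := sub_eq_zero.mp this
    rw [add_comm]
    exact h2
  -- D h (v - N v) = N (D h v)
  have hA : ∀ h v : E n, D h (v - Nf x v) = Nf x (D h v) := by
    intro h v
    rw [map_sub]
    exact sub_eq_of_eq_add' (hidemD h v).symm
  set Q : E n →L[ℝ] E n := ContinuousLinearMap.id ℝ (E n) - Nf x with hQdef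
  have hQ : ∀ v : E n, Q v = v - Nf x v := fun v => rfl
  have hQN : ∀ v : E n, Q (Nf x v) = 0 := by
    intro v; rw [hQ, hNNx]; simp
  -- symmetry of P at x
  have hPsym : ∀ a w : E n, ⟪a, w - Nf x w⟫ = ⟪a - Nf x a, w⟫ := by
    intro a w
    rw [inner_sub_right, inner_sub_left, hsymx]
  -- κ pairing
  have hkap : ∀ a : E n,
      ⟪kappa n Nf x, a⟫ = ∑ k, ⟪a, D (stdb n k - Nf x (stdb n k)) (stdb n k)⟫ := by
    intro a
    have hdiv : ∀ j : Fin n, divM n Nf (fun z => Nf z (stdb n j)) x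
        = ∑ k, ⟪D (stdb n k - Nf x (stdb n k)) (stdb n j), stdb n k⟫ := by
      intro j
      unfold divM
      rw [(hNv (stdb n j)).fderiv]
      simp only [ContinuousLinearMap.flip_apply]
    unfold kappa
    rw [sum_inner]
    calc ∑ j, ⟪(divM n Nf (fun z => Nf z (stdb n j)) x) • stdb n j, a⟫
        = ∑ j, ∑ k, ⟪D (stdb n k - Nf x (stdb n k)) (stdb n j), stdb n k⟫ * a j := by
          refine Finset.sum_congr rfl fun j _ => ?_
          rw [real_inner_smul_left, hdiv, stdb_inner_left, Finset.sum_mul]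
      _ = ∑ k, ∑ j, a j * (D (stdb n k - Nf x (stdb n k)) (stdb n k)) j := by
          rw [Finset.sum_comm]
          refine Finset.sum_congr rfl fun k _ => Finset.sum_congr rfl fun j _ => ?_
          rw [hsymD, stdb_inner_left]
          exact mul_comm _ _
      _ = ∑ k, ⟪a, D (stdb n k - Nf x (stdb n k)) (stdb n k)⟫ := by
          refine Finset.sum_congr rfl fun k _ => ?_
          rw [inner_eq_sum]
  -- normality
  have hNPb : ∀ b : E n, Nf x (b - Nf x b) = 0 := by
    intro b; rw [map_sub, hNNx]; simp
  have hcompsym : ∀ j k : Fin n, (Nf x (stdb n k)) j = (Nf x (stdb n j)) k := by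
    intro j k
    rw [← stdb_inner_right n (Nf x (stdb n k)) j, ← stdb_inner_right n (Nf x (stdb n j)) k,
      real_inner_comm (stdb n j) (Nf x (stdb n k)), ← hsymx]
  have hnorm : ∀ b : E n,
      ∑ k, ⟪b - Nf x b, D (stdb n k - Nf x (stdb n k)) (stdb n k)⟫ = 0 := by
    intro b
    have hsplit : ∀ k : Fin n,
        ⟪b - Nf x b, D (stdb n k - Nf x (stdb n k)) (stdb n k)⟫
          = ⟪b - Nf x b, D (stdb n k - Nf x (stdb n k)) (stdb n k - Nf x (stdb n k))⟫
            + ⟪b - Nf x b, D (stdb n k - Nf x (stdb n k)) (Nf x (stdb n k))⟫ := by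
      intro k
      rw [← inner_add_right]
      congr 1
      rw [map_sub (D (stdb n k - Nf x (stdb n k))) (stdb n k) (Nf x (stdb n k)),
        sub_add_cancel]
    have hfirst : ∀ k : Fin n,
        ⟪b - Nf x b, D (stdb n k - Nf x (stdb n k)) (stdb n k - Nf x (stdb n k))⟫ = 0 := by
      intro k
      rw [hA, ← hsymx, hNPb]
      simp
    have hsecond :
        ∑ k, ⟪b - Nf x b, D (stdb n k - Nf x (stdb n k)) (Nf x (stdb n k))⟫ = 0 := by
      -- expand N e_k in the second slot
      have step1 : ∀ k : Fin n,
          ⟪b - Nf x b, D (stdb n k - Nf x (stdb n k)) (Nf x (stdb n k))⟫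
            = ∑ j, (Nf x (stdb n k)) j *
                ((innerSL ℝ (b - Nf x b)).comp (D (stdb n k - Nf x (stdb n k)))) (stdb n j) := by
        intro k
        rw [sum_mul_clm]
        simp only [ContinuousLinearMap.comp_apply, innerSL_apply_apply]
      calc ∑ k, ⟪b - Nf x b, D (stdb n k - Nf x (stdb n k)) (Nf x (stdb n k))⟫
          = ∑ k, ∑ j, (Nf x (stdb n k)) j *
              ⟪b - Nf x b, D (stdb n k - Nf x (stdb n k)) (stdb n j)⟫ := by
            refine Finset.sum_congr rfl fun k _ => ?_
            rw [step1]
            simp only [ContinuousLinearMap.comp_apply, innerSL_apply_apply]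
        _ = ∑ j, ∑ k, (Nf x (stdb n j)) k *
              (((innerSL ℝ (b - Nf x b)).comp
                ((ContinuousLinearMap.apply ℝ (E n) (stdb n j)).comp (D.comp Q)))) (stdb n k) := by
            rw [Finset.sum_comm]
            refine Finset.sum_congr rfl fun j _ => Finset.sum_congr rfl fun k _ => ?_
            rw [hcompsym]
            simp only [ContinuousLinearMap.comp_apply, innerSL_apply_apply,
              ContinuousLinearMap.apply_apply, hQ]
        _ = ∑ j, (((innerSL ℝ (b - Nf x b)).comp
              ((ContinuousLinearMap.apply ℝ (E n) (stdb n j)).comp (D.comp Q)))) (Nf x (stdb n j)) := by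
            refine Finset.sum_congr rfl fun j _ => ?_
            rw [sum_mul_clm]
        _ = 0 := by
            refine Finset.sum_eq_zero fun j _ => ?_
            simp only [ContinuousLinearMap.comp_apply, innerSL_apply_apply,
              ContinuousLinearMap.apply_apply, hQN, map_zero, inner_zero_right,
              ContinuousLinearMap.zero_apply]
    calc ∑ k, ⟪b - Nf x b, D (stdb n k - Nf x (stdb n k)) (stdb n k)⟫
        = ∑ k, (⟪b - Nf x b, D (stdb n k - Nf x (stdb n k)) (stdb n k - Nf x (stdb n k))⟫
            + ⟪b - Nf x b, D (stdb n k - Nf x (stdb n k)) (Nf x (stdb n k))⟫) :=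
          Finset.sum_congr rfl fun k _ => hsplit k
      _ = 0 := by
          rw [Finset.sum_add_distrib]
          rw [Finset.sum_congr rfl fun k _ => hfirst k, Finset.sum_const_zero,
            zero_add, hsecond]
  -- the per-term derivative of the product
  have hterm : ∀ (a : E n) (k : Fin n) (h : E n),
      fderiv ℝ (fun y => p y * ⟪a, stdb n k - Nf y (stdb n k)⟫) x h
        = p x * (-⟪a, D h (stdb n k)⟫)
          + ⟪a, stdb n k - Nf x (stdb n k)⟫ * fderiv ℝ p x h := by
    intro a k h
    have h1 : HasFDerivAt (fun y => ⟪a, Nf y (stdb n k)⟫)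
        ((innerSL ℝ a).comp (D.flip (stdb n k))) x :=
      (innerSL ℝ a).hasFDerivAt.comp x (hNv (stdb n k))
    have hg : HasFDerivAt (fun y => ⟪a, stdb n k - Nf y (stdb n k)⟫)
        (-((innerSL ℝ a).comp (D.flip (stdb n k)))) x := by
      have h2 := (hasFDerivAt_const (⟪a, stdb n k⟫) x).fun_sub h1
      have hfun : (fun y => ⟪a, stdb n k - Nf y (stdb n k)⟫)
          = fun y => ⟪a, stdb n k⟫ - ⟪a, Nf y (stdb n k)⟫ :=
        funext fun y => inner_sub_right _ _ _
      rw [hfun]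
      simpa using h2
    have hfd := (hp.hasFDerivAt.fun_mul hg).fderiv
    rw [hfd]
    simp only [ContinuousLinearMap.add_apply, ContinuousLinearMap.smul_apply,
      ContinuousLinearMap.neg_apply, ContinuousLinearMap.comp_apply,
      ContinuousLinearMap.flip_apply, innerSL_apply_apply, smul_eq_mul]
  -- main identity (part 1)
  have key1 : ∀ a : E n,
      ∑ k, fderiv ℝ (fun y => p y * ⟪a, stdb n k - Nf y (stdb n k)⟫) x
          (stdb n k - Nf x (stdb n k))
        = fderiv ℝ p x (a - Nf x a) - p x * ⟪kappa n Nf x, a⟫ := by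
    intro a
    have hS1 : ∑ k, ⟪a, stdb n k - Nf x (stdb n k)⟫ *
        fderiv ℝ p x (stdb n k - Nf x (stdb n k)) = fderiv ℝ p x (a - Nf x a) := by
      have : ∀ k : Fin n, ⟪a, stdb n k - Nf x (stdb n k)⟫ *
          fderiv ℝ p x (stdb n k - Nf x (stdb n k))
            = (a - Nf x a) k * ((fderiv ℝ p x).comp Q) (stdb n k) := by
        intro k
        rw [hPsym, stdb_inner_right]
        simp only [ContinuousLinearMap.comp_apply, hQ]
      rw [Finset.sum_congr rfl fun k _ => this k, sum_mul_clm]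
      simp only [ContinuousLinearMap.comp_apply, hQ]
      rw [hNPb, sub_zero]
    calc ∑ k, fderiv ℝ (fun y => p y * ⟪a, stdb n k - Nf y (stdb n k)⟫) x
          (stdb n k - Nf x (stdb n k))
        = ∑ k, (p x * (-⟪a, D (stdb n k - Nf x (stdb n k)) (stdb n k)⟫)
            + ⟪a, stdb n k - Nf x (stdb n k)⟫ *
              fderiv ℝ p x (stdb n k - Nf x (stdb n k))) :=
          Finset.sum_congr rfl fun k _ => hterm a k _
      _ = (∑ k, p x * (-⟪a, D (stdb n k - Nf x (stdb n k)) (stdb n k)⟫))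
            + ∑ k, ⟪a, stdb n k - Nf x (stdb n k)⟫ *
              fderiv ℝ p x (stdb n k - Nf x (stdb n k)) := Finset.sum_add_distrib
      _ = -(p x * ∑ k, ⟪a, D (stdb n k - Nf x (stdb n k)) (stdb n k)⟫)
            + fderiv ℝ p x (a - Nf x a) := by
          rw [hS1, ← Finset.mul_sum, Finset.sum_neg_distrib, mul_neg]
      _ = fderiv ℝ p x (a - Nf x a) - p x * ⟪kappa n Nf x, a⟫ := by
          rw [hkap]
          ring
  refine ⟨key1, fun a => ?_⟩
  have hb : (a - Nf x a) - Nf x (a - Nf x a) = a - Nf x a := by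
    rw [hNPb, sub_zero]
  have := key1 (a - Nf x a)
  rw [hb] at this
  rw [this, hkap, hnorm, mul_zero, sub_zero]
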